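/- Let L ≥ 1, θ ∈ ℝ and x = (x₁,…,x_{2L}) ∈ ℝ^{2L}. Then: (i) ⟨e₀, Q(θ;x)† P(θ) Q(θ;x) e₀⟩ = i · Q₀₀[(x₁,…,x_{2L}, π/2, −x_{2L}, −x_{2L−1}, …, −x₁)](θ), where Q(θ;x)† denotes the conjugate transpose; (ii) for each d ∈ {0,1}, ‖ (1/2)(I + (−1)^d Q(θ;x)) e₀ ‖² = (1/2)[1 + (−1)^d Re Q₀₀[x](θ)]. (This identifies the ancilla-free bias Λ^AF(θ;x) := ⟨e₀, Q(θ;x)† P(θ) Q(θ;x) e₀⟩ with i·Q₀₀ of the extended parameter vector, and the ancilla-based likelihood with (1/2)[1 + (−1)^d Re Q₀₀[x](θ)].) -/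

import Mathlib

open Matrix

noncomputable section

/-- The Pauli matrix `X = !![0,1;1,0]`. -/
def Xm : Matrix (Fin 2) (Fin 2) ℂ := !![0, 1; 1, 0]

/-- The Pauli matrix `Z = !![1,0;0,−1]`. -/
def Zm : Matrix (Fin 2) (Fin 2) ℂ := !![1, 0; 0, -1]

/-- `P(θ) = cos θ • Z + sin θ • X`. -/
def Pmat (θ : ℝ) : Matrix (Fin 2) (Fin 2) ℂ :=
  (Real.cos θ : ℂ) • Zm + (Real.sin θ : ℂ) • Xm

/-- `U(θ;α) = cos α • I − i sin α • P(θ)`. -/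
def Umat (θ a : ℝ) : Matrix (Fin 2) (Fin 2) ℂ :=
  (Real.cos a : ℂ) • (1 : Matrix (Fin 2) (Fin 2) ℂ) - (Complex.I * (Real.sin a : ℂ)) • Pmat θ

/-- `V(β) = cos β • I − i sin β • Z`. -/
def Vmat (b : ℝ) : Matrix (Fin 2) (Fin 2) ℂ :=
  (Real.cos b : ℂ) • (1 : Matrix (Fin 2) (Fin 2) ℂ) - (Complex.I * (Real.sin b : ℂ)) • Zm

/-- Auxiliary recursion for `Q(θ;z)`: the boolean flag records whether the position of
the head of the list is odd (odd positions use `U(θ;·)`, even positions use `V(·)`);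
the head of the list is the *rightmost* factor. -/
def Qaux (θ : ℝ) : Bool → List ℝ → Matrix (Fin 2) (Fin 2) ℂ
  | _, [] => 1
  | odd, z :: rest => Qaux θ (!odd) rest * (if odd then Umat θ z else Vmat z)

/-- `Q(θ; (z₁,…,z_m)) = R_m(z_m) ⋯ R₂(z₂) R₁(z₁)` with `R_j = U(θ;·)` for odd `j` and
`R_j = V(·)` for even `j`. -/
def Qmat (θ : ℝ) (zs : List ℝ) : Matrix (Fin 2) (Fin 2) ℂ := Qaux θ true zs

end

section lemmas

lemma hPH (θ : ℝ) : (Pmat θ)ᴴ = Pmat θ := by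
  ext i j
  fin_cases i <;> fin_cases j <;>
    simp [Pmat, Zm, Xm, conjTranspose_apply, ← Complex.cos_conj, ← Complex.sin_conj,
      Complex.conj_ofReal]

lemma hP2 (θ : ℝ) : Pmat θ * Pmat θ = 1 := by
  have h' := Complex.sin_sq_add_cos_sq (θ : ℂ)
  ext i j
  fin_cases i <;> fin_cases j <;>
    simp [Pmat, Zm, Xm, Matrix.mul_apply, Fin.sum_univ_two, Matrix.one_apply] <;>
    first | linear_combination h' | ring

lemma hZH : (Zm)ᴴ = Zm := by
  ext i j; fin_cases i <;> fin_cases j <;> simp [Zm, conjTranspose_apply]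

lemma hZ2 : Zm * Zm = 1 := by
  ext i j
  fin_cases i <;> fin_cases j <;>
    simp [Zm, Matrix.mul_apply, Fin.sum_univ_two, Matrix.one_apply]

lemma hUH (θ a : ℝ) : (Umat θ a)ᴴ = Umat θ (-a) := by
  simp [Umat, conjTranspose_sub, conjTranspose_smul, hPH, Real.cos_neg, Real.sin_neg,
    Complex.ofReal_neg, Complex.conj_ofReal, mul_neg, neg_mul, neg_smul, sub_neg_eq_add,
    Complex.star_def, _root_.map_mul, Complex.conj_I, ← Complex.cos_conj, ← Complex.sin_conj]

lemma hVH (a : ℝ) : (Vmat a)ᴴ = Vmat (-a) := by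
  simp [Vmat, conjTranspose_sub, conjTranspose_smul, hZH, Real.cos_neg, Real.sin_neg,
    Complex.ofReal_neg, Complex.conj_ofReal, mul_neg, neg_mul, neg_smul, sub_neg_eq_add,
    Complex.star_def, _root_.map_mul, Complex.conj_I, ← Complex.cos_conj, ← Complex.sin_conj]

lemma hUU (θ a : ℝ) : Umat θ (-a) * Umat θ a = 1 := by
  have h' := Complex.sin_sq_add_cos_sq (a : ℂ)
  simp only [Umat, Real.cos_neg, Real.sin_neg, Complex.ofReal_neg, mul_neg, neg_smul,
    sub_neg_eq_add, add_mul, mul_sub, smul_mul_assoc, mul_smul_comm, smul_smul, mul_one, one_mul]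
  rw [hP2]
  match_scalars <;>
    first
      | linear_combination h' - (Complex.sin (a:ℂ))^2 * Complex.I_sq
      | ring1

lemma hVV (a : ℝ) : Vmat (-a) * Vmat a = 1 := by
  have h' := Complex.sin_sq_add_cos_sq (a : ℂ)
  simp only [Vmat, Real.cos_neg, Real.sin_neg, Complex.ofReal_neg, mul_neg, neg_smul,
    sub_neg_eq_add, add_mul, mul_sub, smul_mul_assoc, mul_smul_comm, smul_smul, mul_one, one_mul]
  rw [hZ2]
  match_scalars <;>
    first
      | linear_combination h' - (Complex.sin (a:ℂ))^2 * Complex.I_sq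
      | ring1

/-- unitarity of each factor -/
lemma hRR (θ z : ℝ) (b : Bool) :
    (if b then Umat θ z else Vmat z)ᴴ * (if b then Umat θ z else Vmat z) = 1 := by
  cases b <;> simp [hUH, hVH, hUU, hVV]

lemma Qaux_unitary (θ : ℝ) : ∀ (zs : List ℝ) (b : Bool),
    (Qaux θ b zs)ᴴ * Qaux θ b zs = 1 := by
  intro zs
  induction zs with
  | nil => intro b; simp [Qaux]
  | cons z t ih =>
      intro b
      show (Qaux θ (!b) t * _)ᴴ * (Qaux θ (!b) t * _) = 1
      rw [conjTranspose_mul, mul_assoc, ← mul_assoc (Qaux θ (!b) t)ᴴ, ih (!b), one_mul, hRR]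

lemma Qaux_append (θ : ℝ) : ∀ (zs ws : List ℝ) (b : Bool),
    Qaux θ b (zs ++ ws)
      = Qaux θ (xor (decide (zs.length % 2 = 1)) b) ws * Qaux θ b zs := by
  intro zs
  induction zs with
  | nil => intro ws b; simp [Qaux]
  | cons z t ih =>
      intro ws b
      have hpar : xor (decide (t.length % 2 = 1)) (!b)
          = xor (decide ((z :: t).length % 2 = 1)) b := by
        have h2 : ((z :: t).length % 2 = 1) ↔ ¬(t.length % 2 = 1) := by
          simp only [List.length_cons]; omega
        simp only [decide_eq_decide.mpr h2, decide_not]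
        cases b <;> cases (decide (t.length % 2 = 1)) <;> rfl
      show Qaux θ (!b) (t ++ ws) * _ = _ * (Qaux θ (!b) t * _)
      rw [ih ws (!b), hpar, mul_assoc]

lemma Qaux_rev (θ : ℝ) : ∀ (zs : List ℝ) (b : Bool),
    Qaux θ (!(xor (decide (zs.length % 2 = 1)) b)) ((zs.map (fun t => -t)).reverse)
      = (Qaux θ b zs)ᴴ := by
  intro zs
  induction zs with
  | nil => intro b; simp [Qaux]
  | cons z t ih =>
      intro b
      have hlist : ((z :: t).map (fun t => -t)).reverse
          = (t.map (fun t => -t)).reverse ++ [-z] := by simp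
      rw [hlist, Qaux_append]
      have hlen : ((t.map (fun t => -t)).reverse).length = t.length := by simp
      have hstart : (!(xor (decide ((z :: t).length % 2 = 1)) b))
          = !(xor (decide (t.length % 2 = 1)) (!b)) := by
        have h2 : ((z :: t).length % 2 = 1) ↔ ¬(t.length % 2 = 1) := by
          simp only [List.length_cons]; omega
        simp only [decide_eq_decide.mpr h2, decide_not]
        cases b <;> cases (decide (t.length % 2 = 1)) <;> rfl
      rw [hstart, hlen, ih (!b)]
      have hb : xor (decide (t.length % 2 = 1)) (!(xor (decide (t.length % 2 = 1)) (!b))) = b := by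
        cases b <;> cases (decide (t.length % 2 = 1)) <;> rfl
      rw [hb]
      show (1 : Matrix (Fin 2) (Fin 2) ℂ) * _ * _ = _
      rw [one_mul]
      show _ = (Qaux θ (!b) t * _)ᴴ
      rw [conjTranspose_mul]
      congr 1
      cases b <;> simp [hUH, hVH]

/-- `i • U(θ;π/2) = P(θ)`. -/
lemma hPU (θ : ℝ) : Complex.I • Umat θ (Real.pi / 2) = Pmat θ := by
  simp [Umat, Real.cos_pi_div_two, Real.sin_pi_div_two, smul_smul, Complex.I_mul_I]

end lemmas



/-- (i) the ancilla-free bias `⟨e₀, Q(θ;x)† P(θ) Q(θ;x) e₀⟩` equals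
`i · Q₀₀[(x, π/2, −xᴿ)](θ)`; (ii) for each `d ∈ {0,1}` the ancilla-based probability
`‖(1/2)(I + (−1)^d Q(θ;x)) e₀‖²` equals `(1/2)[1 + (−1)^d Re Q₀₀[x](θ)]`.
Here `⟨e₀, M e₀⟩` is the `(0,0)` entry of `M`, and the squared Euclidean norm of a
vector `v ∈ ℂ²` is `Σ i, ‖v i‖²`. -/
theorem statement0 (L : ℕ) (hL : 1 ≤ L) (θ : ℝ) (xs : List ℝ) (hxs : xs.length = 2 * L) :
    (((Qmat θ xs)ᴴ * Pmat θ * Qmat θ xs) 0 0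
        = Complex.I * Qmat θ (xs ++ [Real.pi / 2] ++ (xs.map (fun t => -t)).reverse) 0 0) ∧
    (∀ d : ℕ, d = 0 ∨ d = 1 →
      (∑ i : Fin 2,
          ‖(((1 : ℂ) / 2) • ((1 + ((-1 : ℂ)) ^ d • Qmat θ xs).mulVec ![1, 0])) i‖ ^ 2)
        = (1 / 2) * (1 + (-1 : ℝ) ^ d * (Qmat θ xs 0 0).re)) := by
  have hxe : decide (xs.length % 2 = 1) = false := by
    simp [hxs, Nat.mul_mod_right]
  constructor
  · -- part (i)
    have h1 : Qmat θ (xs ++ [Real.pi / 2] ++ (xs.map (fun t => -t)).reverse)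
        = (Qmat θ xs)ᴴ * Umat θ (Real.pi / 2) * Qmat θ xs := by
      unfold Qmat
      rw [Qaux_append, Qaux_append]
      have hlen1 : decide ((xs ++ [Real.pi / 2]).length % 2 = 1) = true := by
        simp [hxs, Nat.add_mul_mod_self_left]
      rw [hlen1, hxe]
      have hx2 : Qaux θ (xor true true) ((xs.map (fun t => -t)).reverse)
          = (Qaux θ true xs)ᴴ := by
        have := Qaux_rev θ xs true
        rw [hxe] at this
        simpa using this
      rw [hx2]
      have hsing : Qaux θ (xor false true) [Real.pi / 2] = Umat θ (Real.pi / 2) := by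
        simp [Qaux]
      rw [hsing, mul_assoc]
    rw [h1, ← hPU θ]
    simp only [Matrix.smul_mul, Matrix.mul_smul, Matrix.smul_apply, smul_eq_mul]
  · -- part (ii)
    intro d hd
    set Q := Qmat θ xs with hQdef
    have hunit : Qᴴ * Q = 1 := Qaux_unitary θ xs true
    have hcol : (Q 0 0).re ^ 2 + (Q 0 0).im ^ 2 + ((Q 1 0).re ^ 2 + (Q 1 0).im ^ 2) = 1 := by
      have h := congrFun (congrFun hunit 0) 0
      simp only [Matrix.mul_apply, Fin.sum_univ_two, Matrix.conjTranspose_apply,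
        Matrix.one_apply_eq] at h
      have h' := congrArg Complex.re h
      simpa [Complex.mul_re, Complex.star_def, Complex.conj_re, Complex.conj_im, sq] using h'
    rcases hd with hd | hd <;> subst hd <;>
    · simp only [pow_zero, pow_one, one_smul, neg_smul, one_mul, neg_mul, Fin.sum_univ_two,
        Pi.smul_apply, Matrix.mulVec, dotProduct, Fin.sum_univ_two,
        Matrix.cons_val_zero, Matrix.cons_val_one, Matrix.head_cons,
        Matrix.add_apply, Matrix.one_apply, Matrix.smul_apply, smul_eq_mul,
        Complex.sq_norm]
      simp only [Complex.normSq_apply, Complex.mul_re, Complex.mul_im, Complex.add_re,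
        Complex.add_im, Complex.one_re, Complex.one_im, Complex.neg_re, Complex.neg_im,
        Complex.div_re, Complex.div_im,
        Complex.normSq_ofNat, Complex.one_im, Complex.zero_re, Complex.zero_im]
      norm_num
      linear_combination (1/4) * hcol
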